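/- arXiv:2101.10296 — 4 statements merged into one kernel-verified Lean document; each statement's English description precedes it below -/
import Mathlib

section
/- Let n ≥ 1, p ≥ 1, let f : (Fin n → Fin 2) → ℝ be a cost function and let a be a permutation of Fin n that is a symmetry of f, i.e. f(a·x) = f(x) for all bitstrings x. Let S₁, S₂ ⊆ Fin n be subsets of qubit indices such that S₂ = a(S₁) (the image of S₁ under a). Then for all QAOA parameters β, γ : Fin p → ℝ, the expectations of the Z-product observables Z_{S₁} and Z_{S₂} in the depth-p QAOA state coincide: ⟨β,γ| Z_{S₁} |β,γ⟩ = ⟨β,γ| Z_{S₂} |β,γ⟩. -/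
open scoped Classical
open Matrix

namespace QAOA

/-- Bitstrings on `n` bits: the computational basis index set. -/
abbrev Bit (n : ℕ) := Fin n → Fin 2

/-- Pauli-Z on qubit `j`: diagonal with entries `(-1)^(x j)`. -/
noncomputable def Zop (n : ℕ) (j : Fin n) : Matrix (Bit n) (Bit n) ℂ :=
  Matrix.diagonal fun x => (-1 : ℂ) ^ (x j : ℕ)

/-- Flip bit `j` of bitstring `x`. -/
def flip {n : ℕ} (x : Bit n) (j : Fin n) : Bit n := Function.update x j (1 - x j)

/-- Pauli-X on qubit `j`. -/
noncomputable def Xop (n : ℕ) (j : Fin n) : Matrix (Bit n) (Bit n) ℂ :=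
  Matrix.of fun x y => if y = flip x j then 1 else 0

/-- The Z-product observable `Z_S = ∏_{j ∈ S} Z_j`. -/
noncomputable def Zprod (n : ℕ) (S : Finset (Fin n)) : Matrix (Bit n) (Bit n) ℂ :=
  (S.toList.map (Zop n)).prod

/-- The mixing Hamiltonian `B = ∑ j, X_j`. -/
noncomputable def mixB (n : ℕ) : Matrix (Bit n) (Bit n) ℂ := ∑ j, Xop n j

/-- The cost Hamiltonian `H(f)`, diagonal with entries `f x`. -/
noncomputable def costH (n : ℕ) (f : Bit n → ℝ) : Matrix (Bit n) (Bit n) ℂ :=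
  Matrix.diagonal fun x => (f x : ℂ)

/-- The uniform superposition `|s⟩`, all entries `2^(-n/2)`. -/
noncomputable def uniform (n : ℕ) : Bit n → ℂ := fun _ => (((2 : ℝ) ^ (-(n : ℝ) / 2) : ℝ) : ℂ)

/-- The depth-`p` QAOA state
`|β,γ⟩ = exp(-i β_p B) exp(-i γ_p H(f)) ⋯ exp(-i β_1 B) exp(-i γ_1 H(f)) |s⟩`. -/
noncomputable def qaoaState (n p : ℕ) (f : Bit n → ℝ) (β γ : Fin p → ℝ) : Bit n → ℂ :=
  ((List.finRange p).map fun k =>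
      NormedSpace.exp ((-Complex.I * (β k : ℂ)) • mixB n) *
      NormedSpace.exp ((-Complex.I * (γ k : ℂ)) • costH n f)).reverse.prod *ᵥ uniform n

/-- The expectation `⟨ψ|M|ψ⟩ = ∑ x, conj (ψ x) * (M ψ) x`. -/
noncomputable def expectation {n : ℕ} (M : Matrix (Bit n) (Bit n) ℂ) (ψ : Bit n → ℂ) : ℂ :=
  ∑ x, star (ψ x) * (M *ᵥ ψ) x

/-- The action of a permutation of qubit indices on bitstrings: `(a·x) j = x (a⁻¹ j)`. -/
def permAct {n : ℕ} (a : Equiv.Perm (Fin n)) (x : Bit n) : Bit n := fun j => x (a⁻¹ j)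

/-- The permutation unitary induced by `a`: `A x y = 1` iff `x = a·y`. -/
noncomputable def permMat {n : ℕ} (a : Equiv.Perm (Fin n)) : Matrix (Bit n) (Bit n) ℂ :=
  Matrix.of fun x y => if x = permAct a y then 1 else 0


variable {n : ℕ}

lemma permAct_permAct (a b : Equiv.Perm (Fin n)) (x : Bit n) :
    permAct a (permAct b x) = permAct (a * b) x := by
  funext j; simp [permAct]

lemma permAct_one (x : Bit n) : permAct 1 x = x := by funext j; simp [permAct]

lemma permAct_inv_permAct (a : Equiv.Perm (Fin n)) (x : Bit n) :
    permAct a⁻¹ (permAct a x) = x := by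
  rw [permAct_permAct, inv_mul_cancel, permAct_one]

lemma permAct_permAct_inv (a : Equiv.Perm (Fin n)) (x : Bit n) :
    permAct a (permAct a⁻¹ x) = x := by
  rw [permAct_permAct, mul_inv_cancel, permAct_one]

lemma permAct_inj (a : Equiv.Perm (Fin n)) : Function.Injective (permAct a) := by
  intro x y h
  have := congrArg (permAct a⁻¹) h
  rwa [permAct_inv_permAct, permAct_inv_permAct] at this

lemma eq_permAct_iff (a : Equiv.Perm (Fin n)) (x z : Bit n) :
    x = permAct a z ↔ permAct a⁻¹ x = z := by
  constructor
  · rintro rfl; exact permAct_inv_permAct a z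
  · rintro rfl; exact (permAct_permAct_inv a x).symm

lemma permMat_mul (a : Equiv.Perm (Fin n)) (M : Matrix (Bit n) (Bit n) ℂ) :
    permMat a * M = Matrix.of fun x y => M (permAct a⁻¹ x) y := by
  ext x y
  simp only [Matrix.mul_apply, permMat, Matrix.of_apply, eq_permAct_iff]
  simp [Finset.sum_ite_eq]

lemma mul_permMat (a : Equiv.Perm (Fin n)) (M : Matrix (Bit n) (Bit n) ℂ) :
    M * permMat a = Matrix.of fun x y => M x (permAct a y) := by
  ext x y
  simp only [Matrix.mul_apply, permMat, Matrix.of_apply]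
  simp [eq_comm, Finset.sum_ite_eq]

lemma commute_permMat_of_equivariant (a : Equiv.Perm (Fin n))
    (M : Matrix (Bit n) (Bit n) ℂ)
    (h : ∀ x y, M (permAct a x) (permAct a y) = M x y) :
    Commute (permMat a) M := by
  rw [Commute, SemiconjBy, permMat_mul, mul_permMat]
  ext x y
  simp only [Matrix.of_apply]
  rw [← h (permAct a⁻¹ x) y, permAct_permAct_inv]

lemma permAct_flip (a : Equiv.Perm (Fin n)) (x : Bit n) (j : Fin n) :
    permAct a (flip x j) = flip (permAct a x) (a j) := by
  funext j'
  simp only [permAct, flip, Function.update_apply]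
  rcases eq_or_ne j' (a j) with rfl | h
  · simp
  · have h2 : a⁻¹ j' ≠ j := fun hh => h (by rw [← hh, Equiv.Perm.inv_def, Equiv.apply_symm_apply])
    rw [Equiv.Perm.inv_def] at h2
    simp [h, h2]

lemma commute_permMat_costH (a : Equiv.Perm (Fin n)) (f : Bit n → ℝ)
    (hsym : ∀ x : Bit n, f (permAct a x) = f x) :
    Commute (permMat a) (costH n f) := by
  refine commute_permMat_of_equivariant a _ fun x y => ?_
  simp only [costH, Matrix.diagonal_apply]
  rcases eq_or_ne x y with rfl | h
  · simp [hsym]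
  · rw [if_neg (fun hh => h (permAct_inj a hh)), if_neg h]

lemma commute_permMat_mixB (a : Equiv.Perm (Fin n)) :
    Commute (permMat a) (mixB n) := by
  refine commute_permMat_of_equivariant a _ fun x y => ?_
  simp only [mixB, Matrix.sum_apply]
  rw [← Equiv.sum_comp a fun j => Xop n j (permAct a x) (permAct a y)]
  refine Finset.sum_congr rfl fun j _ => ?_
  simp only [Xop, Matrix.of_apply, ← permAct_flip]
  rcases eq_or_ne y (flip x j) with rfl | h
  · simp
  · rw [if_neg (fun hh => h (permAct_inj a hh)), if_neg h]

lemma commute_permMat_prod (p : ℕ) (f : Bit n → ℝ) (a : Equiv.Perm (Fin n))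
    (hsym : ∀ x : Bit n, f (permAct a x) = f x) (β γ : Fin p → ℝ) :
    Commute (permMat a)
      ((List.finRange p).map fun k =>
        NormedSpace.exp ((-Complex.I * (β k : ℂ)) • mixB n) *
        NormedSpace.exp ((-Complex.I * (γ k : ℂ)) • costH n f)).reverse.prod := by
  refine Commute.list_prod_right _ _ fun M hM => ?_
  rw [List.mem_reverse, List.mem_map] at hM
  obtain ⟨k, -, rfl⟩ := hM
  exact (((commute_permMat_mixB a).smul_right _).exp_right).mul_right
    (((commute_permMat_costH a f hsym).smul_right _).exp_right)

lemma permMat_mulVec (a : Equiv.Perm (Fin n)) (v : Bit n → ℂ) (x : Bit n) :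
    (permMat a *ᵥ v) x = v (permAct a⁻¹ x) := by
  simp only [Matrix.mulVec, dotProduct, permMat, Matrix.of_apply, eq_permAct_iff]
  simp [Finset.sum_ite_eq]

lemma qaoaState_perm_invariant (p : ℕ) (f : Bit n → ℝ) (a : Equiv.Perm (Fin n))
    (hsym : ∀ x : Bit n, f (permAct a x) = f x) (β γ : Fin p → ℝ) (x : Bit n) :
    qaoaState n p f β γ (permAct a x) = qaoaState n p f β γ x := by
  have hu : permMat a *ᵥ uniform n = uniform n := by
    funext z; rw [permMat_mulVec]; rfl
  have hfix : permMat a *ᵥ qaoaState n p f β γ = qaoaState n p f β γ := by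
    rw [qaoaState, Matrix.mulVec_mulVec, (commute_permMat_prod p f a hsym β γ).eq,
      ← Matrix.mulVec_mulVec, hu]
  have key : ∀ z, qaoaState n p f β γ (permAct a⁻¹ z) = qaoaState n p f β γ z := by
    intro z
    have h2 := congrFun hfix z
    rwa [permMat_mulVec] at h2
  have h3 := key (permAct a x)
  rw [permAct_inv_permAct] at h3
  exact h3.symm

lemma Zprod_eq_diagonal (S : Finset (Fin n)) :
    Zprod n S = Matrix.diagonal fun x => ∏ j ∈ S, (-1 : ℂ) ^ (x j : ℕ) := by
  have key : ∀ l : List (Fin n), (l.map (Zop n)).prod =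
      Matrix.diagonal fun x => (l.map fun j => (-1 : ℂ) ^ (x j : ℕ)).prod := by
    intro l
    induction l with
    | nil => simp [Matrix.diagonal_one]
    | cons j l ih =>
      simp only [List.map_cons, List.prod_cons, ih, Zop, Matrix.diagonal_mul_diagonal]
  rw [Zprod, key]
  exact congrArg Matrix.diagonal (funext fun x => Finset.prod_map_toList S _)

lemma expectation_diagonal (d : Bit n → ℂ) (ψ : Bit n → ℂ) :
    expectation (Matrix.diagonal d) ψ = ∑ x, star (ψ x) * (d x * ψ x) := by
  simp [expectation, Matrix.mulVec_diagonal]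

/-- The bitstring permutation as an `Equiv`. -/
def permEquiv (a : Equiv.Perm (Fin n)) : Bit n ≃ Bit n :=
  ⟨permAct a, permAct a⁻¹, permAct_inv_permAct a, permAct_permAct_inv a⟩

/-- If `a` is a variable-permutation symmetry of the cost function `f`
and `S₂ = a(S₁)`, then the QAOA expectations of `Z_{S₁}` and `Z_{S₂}` coincide for
all depths `p ≥ 1` and all parameters. -/
theorem qaoa_expectation_eq_of_symmetry (n p : ℕ) (hn : 1 ≤ n) (hp : 1 ≤ p)
    (f : Bit n → ℝ) (a : Equiv.Perm (Fin n))
    (hsym : ∀ x : Bit n, f (permAct a x) = f x)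
    (S₁ S₂ : Finset (Fin n)) (hS : S₂ = S₁.image a)
    (β γ : Fin p → ℝ) :
    expectation (Zprod n S₁) (qaoaState n p f β γ) =
      expectation (Zprod n S₂) (qaoaState n p f β γ) := by
  rw [Zprod_eq_diagonal, Zprod_eq_diagonal, expectation_diagonal, expectation_diagonal]
  rw [← Equiv.sum_comp (permEquiv a)
    (fun x => star (qaoaState n p f β γ x) *
      ((∏ j ∈ S₂, (-1 : ℂ) ^ (x j : ℕ)) * qaoaState n p f β γ x))]
  refine Finset.sum_congr rfl fun x _ => ?_
  simp only [permEquiv, Equiv.coe_fn_mk]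
  have hinv : qaoaState n p f β γ (permAct a x) = qaoaState n p f β γ x :=
    qaoaState_perm_invariant p f a hsym β γ x
  have hprod : (∏ j ∈ S₂, (-1 : ℂ) ^ ((permAct a x) j : ℕ))
      = ∏ j ∈ S₁, (-1 : ℂ) ^ (x j : ℕ) := by
    rw [hS, Finset.prod_image (fun i _ j _ h => a.injective h)]
    refine Finset.prod_congr rfl fun j _ => ?_
    have hj : (permAct a x) (a j) = x j := by simp [permAct]
    rw [hj]
  rw [hinv, hprod]

end QAOA
end

section
/- Let n ≥ 1, S ⊆ Fin n, and β ∈ ℝ. Then the conjugation of the Z-product observable Z_S by the mixing operator has support only on the qubits in S: exp(i β B) · Z_S · exp(-i β B) = (∏_{j∈S} exp(i β X_j)) · Z_S · (∏_{j∈S} exp(-i β X_j)), where B = ∑_{j=1}^{n} X_j. In particular, the factors exp(-i β X_j) with j ∉ S commute through Z_S and cancel. -/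
open scoped Classical
open Matrix

namespace QAOA

lemma flip_comm {n} (x : Bit n) (j k : Fin n) : flip (flip x j) k = flip (flip x k) j := by
  rcases eq_or_ne j k with rfl | h
  · rfl
  · simp only [flip]
    rw [Function.update_of_ne (Ne.symm h), Function.update_of_ne h, Function.update_comm h]

lemma Xop_mul_Xop (n : ℕ) (j k : Fin n) :
    Xop n j * Xop n k = Matrix.of fun x y => if y = flip (flip x j) k then 1 else 0 := by
  ext x y
  simp only [Xop, Matrix.mul_apply, Matrix.of_apply, ite_mul, one_mul, zero_mul]
  rw [Finset.sum_eq_single (flip x j)]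
  · simp
  · intro z _ hz; simp [hz]
  · intro h; exact absurd (Finset.mem_univ _) h

lemma Xop_commute (n : ℕ) (j k : Fin n) : Commute (Xop n j) (Xop n k) := by
  unfold Commute SemiconjBy
  rw [Xop_mul_Xop, Xop_mul_Xop]
  ext x y
  rw [Matrix.of_apply, Matrix.of_apply, flip_comm]

lemma prod_Zop_diag (n : ℕ) (L : List (Fin n)) :
    (L.map (Zop n)).prod = Matrix.diagonal fun x => (L.map fun j => (-1:ℂ)^(x j : ℕ)).prod := by
  induction L with
  | nil => simp
  | cons a t ih => simp [ih, Zop, Matrix.diagonal_mul_diagonal]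

lemma Zprod_commute_Xop {n : ℕ} (S : Finset (Fin n)) {j : Fin n} (hj : j ∉ S) :
    Commute (Zprod n S) (Xop n j) := by
  unfold Commute SemiconjBy Zprod
  rw [prod_Zop_diag]
  ext x y
  rw [Matrix.diagonal_mul, Matrix.mul_diagonal]
  simp only [Xop, Matrix.of_apply]
  by_cases h : y = flip x j
  · subst h
    rw [if_pos rfl, mul_one, one_mul]
    congr 1
    apply List.map_congr_left
    intro k hk
    have hkj : k ≠ j := fun e => hj (e ▸ Finset.mem_toList.mp hk)
    simp [flip, Function.update_of_ne hkj]
  · simp [h]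

/-- Commutation passes to the matrix exponential. -/
lemma commute_exp_right {n : ℕ} (A B : Matrix (Bit n) (Bit n) ℂ) (h : Commute A B) :
    Commute A (NormedSpace.exp B) := by
  letI : SeminormedRing (Matrix (Bit n) (Bit n) ℂ) := Matrix.linftyOpSemiNormedRing
  letI : NormedRing (Matrix (Bit n) (Bit n) ℂ) := Matrix.linftyOpNormedRing
  letI : NormedAlgebra ℂ (Matrix (Bit n) (Bit n) ℂ) := Matrix.linftyOpNormedAlgebra
  exact h.exp_right

lemma exp_smul_list_sum {n : ℕ} (c : ℂ) (L : List (Fin n)) :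
    NormedSpace.exp ((L.map fun j => c • Xop n j).sum) =
      (L.map fun j => NormedSpace.exp (c • Xop n j)).prod := by
  induction L with
  | nil => simp
  | cons a t ih =>
    simp only [List.map_cons, List.sum_cons, List.prod_cons]
    rw [Matrix.exp_add_of_commute, ih]
    refine Commute.list_sum_right _ _ fun b hb => ?_
    obtain ⟨k, _, rfl⟩ := List.mem_map.mp hb
    exact ((Xop_commute n a k).smul_left c).smul_right c

lemma exp_smul_finset_sum {n : ℕ} (c : ℂ) (S : Finset (Fin n)) :
    NormedSpace.exp (∑ j ∈ S, c • Xop n j) =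
      (S.toList.map fun j => NormedSpace.exp (c • Xop n j)).prod := by
  rw [← Finset.sum_map_toList, exp_smul_list_sum]


/-- Conjugating `Z_S` by the mixing operator only involves the qubits
in `S`: the factors `exp(-i β X_j)` with `j ∉ S` commute through and cancel. -/
theorem mixer_conj_support (n : ℕ) (hn : 1 ≤ n) (S : Finset (Fin n)) (β : ℝ) :
    NormedSpace.exp ((Complex.I * (β : ℂ)) • mixB n) * Zprod n S *
        NormedSpace.exp ((-Complex.I * (β : ℂ)) • mixB n) =
      (S.toList.map fun j => NormedSpace.exp ((Complex.I * (β : ℂ)) • Xop n j)).prod *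
          Zprod n S *
        (S.toList.map fun j => NormedSpace.exp ((-Complex.I * (β : ℂ)) • Xop n j)).prod := by
  set c : ℂ := Complex.I * (β : ℂ) with hc
  have hneg : -Complex.I * (β : ℂ) = -c := by rw [hc, neg_mul]
  rw [hneg]
  -- decomposition of the exponential of the mixer
  have hcommXX : ∀ (a b : ℂ) (j k : Fin n), Commute (a • Xop n j) (b • Xop n k) :=
    fun a b j k => ((Xop_commute n j k).smul_left a).smul_right b
  have hsplit : ∀ d : ℂ, NormedSpace.exp (d • mixB n) =
      (S.toList.map fun j => NormedSpace.exp (d • Xop n j)).prod *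
        NormedSpace.exp (∑ j ∈ Sᶜ, d • Xop n j) := by
    intro d
    have : d • mixB n = (∑ j ∈ S, d • Xop n j) + ∑ j ∈ Sᶜ, d • Xop n j := by
      rw [Finset.sum_add_sum_compl, mixB, Finset.smul_sum]
    rw [this, Matrix.exp_add_of_commute, exp_smul_finset_sum]
    exact Commute.sum_left _ _ _ fun j _ => Commute.sum_right _ _ _ fun k _ => hcommXX d d j k
  -- the off-support factor commutes with Z_S
  have hQZ : ∀ d : ℂ, Commute (NormedSpace.exp (∑ j ∈ Sᶜ, d • Xop n j)) (Zprod n S) := by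
    intro d
    refine (commute_exp_right _ _ ?_).symm
    exact Commute.sum_right _ _ _ fun k hk =>
      (Zprod_commute_Xop S (Finset.mem_compl.mp hk)).smul_right d
  -- the off-support factor commutes with the on-support product
  have hQP : ∀ d e : ℂ, Commute (NormedSpace.exp (∑ j ∈ Sᶜ, d • Xop n j))
      ((S.toList.map fun j => NormedSpace.exp (e • Xop n j)).prod) := by
    intro d e
    refine Commute.list_prod_right _ _ fun b hb => ?_
    obtain ⟨k, _, rfl⟩ := List.mem_map.mp hb
    refine commute_exp_right _ _ ((commute_exp_right _ _ ?_).symm)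
    exact Commute.sum_right _ _ _ fun j _ => hcommXX e d k j
  -- cancellation of the off-support factors
  have hQQ : NormedSpace.exp (∑ j ∈ Sᶜ, c • Xop n j) *
      NormedSpace.exp (∑ j ∈ Sᶜ, (-c) • Xop n j) = 1 := by
    rw [← Matrix.exp_add_of_commute]
    · have : (∑ j ∈ Sᶜ, c • Xop n j) + ∑ j ∈ Sᶜ, (-c) • Xop n j = 0 := by
        rw [← Finset.sum_add_distrib]
        simp [neg_smul]
      rw [this, NormedSpace.exp_zero]
    · exact Commute.sum_left _ _ _ fun j _ => Commute.sum_right _ _ _ fun k _ => hcommXX _ _ j k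
  rw [hsplit c, hsplit (-c)]
  set P := (S.toList.map fun j => NormedSpace.exp (c • Xop n j)).prod
  set P' := (S.toList.map fun j => NormedSpace.exp ((-c) • Xop n j)).prod
  set Q := NormedSpace.exp (∑ j ∈ Sᶜ, c • Xop n j)
  set Q' := NormedSpace.exp (∑ j ∈ Sᶜ, (-c) • Xop n j)
  calc P * Q * Zprod n S * (P' * Q')
      = P * (Q * Zprod n S * P' * Q') := by simp only [mul_assoc]
    _ = P * (Zprod n S * (Q * P') * Q') := by rw [(hQZ c).eq, mul_assoc (Zprod n S)]
    _ = P * (Zprod n S * (P' * Q) * Q') := by rw [(hQP c (-c)).eq]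
    _ = P * Zprod n S * P' := by
        rw [mul_assoc (Zprod n S), mul_assoc P', hQQ, mul_one, ← mul_assoc]
  done


end QAOA
end

section
/- Let G be a finite simple graph on vertex set Fin n, let σ be a graph automorphism of G, and let {u, v} be an edge of G. Then for the depth-p MaxCut QAOA state (the QAOA state for the cost function f = cut), for all p ≥ 1 and all parameters β, γ : Fin p → ℝ, the two-point correlations of the edge and its image under σ coincide: ⟨β,γ| Z_u Z_v |β,γ⟩ = ⟨β,γ| Z_{σ u} Z_{σ v} |β,γ⟩. -/
open scoped Classical
open Matrix

namespace QAOA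

/-- The MaxCut objective: the number of edges `{u,v}` of `G` with `x u ≠ x v`. -/
noncomputable def cut {n : ℕ} (G : SimpleGraph (Fin n)) (x : Bit n) : ℕ :=
  (G.edgeFinset.filter fun e =>
    Sym2.lift ⟨fun u v => x u ≠ x v, fun u v => by simp [ne_comm]⟩ e).card

-- ===== auxiliary development =====

def bitEquiv {n : ℕ} (σ : Equiv.Perm (Fin n)) : Bit n ≃ Bit n :=
  Equiv.arrowCongr σ (Equiv.refl (Fin 2))

lemma bitEquiv_apply {n : ℕ} (σ : Equiv.Perm (Fin n)) (x : Bit n) (j : Fin n) :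
    bitEquiv σ x j = x (σ.symm j) := rfl

lemma bitEquiv_symm_apply {n : ℕ} (σ : Equiv.Perm (Fin n)) (x : Bit n) (j : Fin n) :
    (bitEquiv σ).symm x j = x (σ j) := rfl

lemma algEquiv_exp {n : ℕ} (Φ : Matrix (Bit n) (Bit n) ℂ ≃ₐ[ℂ] Matrix (Bit n) (Bit n) ℂ)
    (M : Matrix (Bit n) (Bit n) ℂ) :
    Φ (NormedSpace.exp M) = NormedSpace.exp (Φ M) := by
  have hc : Continuous Φ := Φ.toLinearMap.continuous_of_finiteDimensional
  have hc' : Continuous Φ.symm := Φ.symm.toLinearMap.continuous_of_finiteDimensional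
  let Φc : Matrix (Bit n) (Bit n) ℂ ≃L[ℂ] Matrix (Bit n) (Bit n) ℂ :=
    ⟨Φ.toLinearEquiv, hc, hc'⟩
  simp only [NormedSpace.exp_eq_tsum ℂ]
  have := Φc.map_tsum (L := SummationFilter.unconditional ℕ) (f := fun k : ℕ => ((Nat.factorial k : ℂ)⁻¹ • M ^ k))
  have hco : ∀ k : ℕ, Φc ((Nat.factorial k : ℂ)⁻¹ • M ^ k) = (Nat.factorial k : ℂ)⁻¹ • (Φ M) ^ k := by
    intro k
    show Φ ((Nat.factorial k : ℂ)⁻¹ • M ^ k) = _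
    rw [_root_.map_smul, map_pow]
  rw [show (Φ (∑' (k : ℕ), (Nat.factorial k : ℂ)⁻¹ • M ^ k)) =
      Φc (∑' (k : ℕ), (Nat.factorial k : ℂ)⁻¹ • M ^ k) from rfl, this]
  exact tsum_congr hco

noncomputable def Phi {n : ℕ} (σ : Equiv.Perm (Fin n)) :
    Matrix (Bit n) (Bit n) ℂ ≃ₐ[ℂ] Matrix (Bit n) (Bit n) ℂ :=
  Matrix.reindexAlgEquiv ℂ ℂ (bitEquiv σ).symm

lemma Phi_apply {n : ℕ} (σ : Equiv.Perm (Fin n)) (M : Matrix (Bit n) (Bit n) ℂ) :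
    Phi σ M = M.submatrix (bitEquiv σ) (bitEquiv σ) := by
  show Matrix.reindex (bitEquiv σ).symm (bitEquiv σ).symm M = _
  rw [Matrix.reindex_apply, Equiv.symm_symm]

lemma Phi_Zop {n : ℕ} (σ : Equiv.Perm (Fin n)) (j : Fin n) :
    Phi σ (Zop n (σ j)) = Zop n j := by
  rw [Phi_apply, Zop, Matrix.submatrix_diagonal_equiv]
  refine congrArg Matrix.diagonal (funext fun x => ?_)
  show ((-1 : ℂ)) ^ ((bitEquiv σ x) (σ j) : ℕ) = _
  rw [bitEquiv_apply, Equiv.symm_apply_apply]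

lemma Phi_Xop {n : ℕ} (σ : Equiv.Perm (Fin n)) (j : Fin n) :
    Phi σ (Xop n j) = Xop n (σ.symm j) := by
  rw [Phi_apply]
  ext x y
  show (if bitEquiv σ y = flip (bitEquiv σ x) j then (1:ℂ) else 0)
      = if y = flip x (σ.symm j) then 1 else 0
  have key : bitEquiv σ y = flip (bitEquiv σ x) j ↔ y = flip x (σ.symm j) := by
    rw [← (bitEquiv σ).apply_eq_iff_eq (x := y) (y := flip x (σ.symm j))]
    constructor <;> intro h <;> rw [h] <;> clear h
    · funext k
      rw [bitEquiv_apply]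
      simp only [flip, Function.update_apply, bitEquiv_apply]
      by_cases hk : k = j
      · simp [hk]
      · have : ¬ σ.symm k = σ.symm j := fun hh => hk (σ.symm.injective hh)
        simp [hk, this]
    · funext k
      rw [bitEquiv_apply]
      simp only [flip, Function.update_apply, bitEquiv_apply]
      by_cases hk : k = σ j
      · subst hk; simp [Equiv.eq_symm_apply]
      · have h2 : ¬ σ.symm k = j := fun hh => hk (by rw [← hh]; simp)
        simp [hk, h2]
  simp [key]

lemma Phi_mixB {n : ℕ} (σ : Equiv.Perm (Fin n)) : Phi σ (mixB n) = mixB n := by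
  rw [mixB, map_sum]
  rw [show (∑ j, Phi σ (Xop n j)) = ∑ j, Xop n (σ.symm j) from
    Finset.sum_congr rfl fun j _ => Phi_Xop σ j]
  exact Fintype.sum_equiv σ.symm _ _ fun j => rfl

lemma cut_bitEquiv {n : ℕ} (G : SimpleGraph (Fin n)) (σ : Equiv.Perm (Fin n))
    (hauto : ∀ u v, G.Adj (σ u) (σ v) ↔ G.Adj u v) (x : Bit n) :
    cut G (bitEquiv σ x) = cut G x := by
  unfold cut
  refine Finset.card_bij' (fun e _ => Sym2.map σ.symm e) (fun e _ => Sym2.map σ e) ?_ ?_ ?_ ?_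
  · intro e he
    induction e using Sym2.ind with
    | _ a b =>
      simp only [Finset.mem_filter, SimpleGraph.mem_edgeFinset, Sym2.map_pair_eq,
        SimpleGraph.mem_edgeSet, Sym2.lift_mk] at he ⊢
      refine ⟨?_, ?_⟩
      · rw [← hauto]; simpa using he.1
      · simpa [bitEquiv_apply] using he.2
  · intro e he
    induction e using Sym2.ind with
    | _ a b =>
      simp only [Finset.mem_filter, SimpleGraph.mem_edgeFinset, Sym2.map_pair_eq,
        SimpleGraph.mem_edgeSet, Sym2.lift_mk] at he ⊢
      refine ⟨(hauto a b).mpr he.1, ?_⟩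
      have := he.2
      simpa [bitEquiv_apply] using this
  · intro e he
    induction e using Sym2.ind with
    | _ a b => simp [Sym2.map_pair_eq]
  · intro e he
    induction e using Sym2.ind with
    | _ a b => simp [Sym2.map_pair_eq]

lemma Phi_costH {n : ℕ} (G : SimpleGraph (Fin n)) (σ : Equiv.Perm (Fin n))
    (hauto : ∀ u v, G.Adj (σ u) (σ v) ↔ G.Adj u v) :
    Phi σ (costH n (fun x => ((cut G x : ℕ) : ℝ))) = costH n (fun x => ((cut G x : ℕ) : ℝ)) := by
  rw [Phi_apply, costH, Matrix.submatrix_diagonal_equiv]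
  refine congrArg Matrix.diagonal (funext fun x => ?_)
  simp only [Function.comp_apply, cut_bitEquiv G σ hauto]

lemma Phi_prod {n p : ℕ} (G : SimpleGraph (Fin n)) (σ : Equiv.Perm (Fin n))
    (hauto : ∀ u v, G.Adj (σ u) (σ v) ↔ G.Adj u v) (β γ : Fin p → ℝ) :
    Phi σ (((List.finRange p).map fun k =>
      NormedSpace.exp ((-Complex.I * (β k : ℂ)) • mixB n) *
      NormedSpace.exp ((-Complex.I * (γ k : ℂ)) • costH n
        (fun x => ((cut G x : ℕ) : ℝ)))).reverse.prod)
    = ((List.finRange p).map fun k =>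
      NormedSpace.exp ((-Complex.I * (β k : ℂ)) • mixB n) *
      NormedSpace.exp ((-Complex.I * (γ k : ℂ)) • costH n
        (fun x => ((cut G x : ℕ) : ℝ)))).reverse.prod := by
  rw [← List.map_reverse, map_list_prod, List.map_map]
  congr 1
  refine List.map_congr_left fun k _ => ?_
  show Phi σ (_ * _) = _
  rw [_root_.map_mul, algEquiv_exp, algEquiv_exp, _root_.map_smul, _root_.map_smul,
    Phi_mixB, Phi_costH G σ hauto]

lemma qaoaState_symm {n p : ℕ} (G : SimpleGraph (Fin n)) (σ : Equiv.Perm (Fin n))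
    (hauto : ∀ u v, G.Adj (σ u) (σ v) ↔ G.Adj u v) (β γ : Fin p → ℝ) (x : Bit n) :
    qaoaState n p (fun x => ((cut G x : ℕ) : ℝ)) β γ (bitEquiv σ x)
      = qaoaState n p (fun x => ((cut G x : ℕ) : ℝ)) β γ x := by
  set P := ((List.finRange p).map fun k =>
      NormedSpace.exp ((-Complex.I * (β k : ℂ)) • mixB n) *
      NormedSpace.exp ((-Complex.I * (γ k : ℂ)) • costH n
        (fun x => ((cut G x : ℕ) : ℝ)))).reverse.prod with hP
  have hent : ∀ a b : Bit n, P (bitEquiv σ a) (bitEquiv σ b) = P a b := by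
    intro a b
    have := Phi_prod G σ hauto β γ
    rw [Phi_apply] at this
    calc P (bitEquiv σ a) (bitEquiv σ b) = (P.submatrix (bitEquiv σ) (bitEquiv σ)) a b := rfl
      _ = P a b := by rw [this]
  show (P *ᵥ uniform n) (bitEquiv σ x) = (P *ᵥ uniform n) x
  unfold Matrix.mulVec dotProduct
  refine (Fintype.sum_equiv (bitEquiv σ) _ _ fun y => ?_).symm
  show P x y * uniform n y = P (bitEquiv σ x) (bitEquiv σ y) * uniform n (bitEquiv σ y)
  rw [hent]
  rfl


/-- For MaxCut QAOA, the two-point correlations of an edge and of its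
image under a graph automorphism coincide. -/
theorem maxcut_correlation_eq_of_automorphism (n p : ℕ) (hp : 1 ≤ p)
    (G : SimpleGraph (Fin n)) (σ : Equiv.Perm (Fin n))
    (hauto : ∀ u v, G.Adj (σ u) (σ v) ↔ G.Adj u v)
    (u v : Fin n) (he : G.Adj u v) (β γ : Fin p → ℝ) :
    expectation (Zop n u * Zop n v)
        (qaoaState n p (fun x => ((cut G x : ℕ) : ℝ)) β γ) =
      expectation (Zop n (σ u) * Zop n (σ v))
        (qaoaState n p (fun x => ((cut G x : ℕ) : ℝ)) β γ) := by
  set ψ := qaoaState n p (fun x => ((cut G x : ℕ) : ℝ)) β γ with hψ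
  have hsym : ∀ x, ψ (bitEquiv σ x) = ψ x := qaoaState_symm G σ hauto β γ
  have hM : (Zop n (σ u) * Zop n (σ v)).submatrix (bitEquiv σ) (bitEquiv σ)
      = Zop n u * Zop n v := by
    have : Phi σ (Zop n (σ u) * Zop n (σ v)) = Zop n u * Zop n v := by
      rw [_root_.map_mul, Phi_Zop, Phi_Zop]
    rw [← this, Phi_apply]
  unfold expectation
  refine Fintype.sum_equiv (bitEquiv σ) _ _ fun x => ?_
  rw [hsym]
  congr 1
  show ((Zop n u * Zop n v) *ᵥ ψ) x = ((Zop n (σ u) * Zop n (σ v)) *ᵥ ψ) (bitEquiv σ x)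
  unfold Matrix.mulVec dotProduct
  refine Fintype.sum_equiv (bitEquiv σ) _ _ fun y => ?_
  show (Zop n u * Zop n v) x y * ψ y
      = (Zop n (σ u) * Zop n (σ v)) (bitEquiv σ x) (bitEquiv σ y) * ψ (bitEquiv σ y)
  rw [hsym, show (Zop n (σ u) * Zop n (σ v)) (bitEquiv σ x) (bitEquiv σ y)
    = ((Zop n (σ u) * Zop n (σ v)).submatrix (bitEquiv σ) (bitEquiv σ)) x y from rfl, hM]


end QAOA
end

section
/- Let n ≥ 1, let f : (Fin n → Fin 2) → ℝ have a symmetry a (a permutation of Fin n with f(a·x) = f(x) for all bitstrings x), and let A be the permutation unitary induced by a. Then A commutes with both the phase operator and the mixing operator for all parameter values: [A, exp(-i γ H(f))] = 0 for all γ ∈ ℝ and [A, exp(-i β B)] = 0 for all β ∈ ℝ, where B = ∑_j X_j. -/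
open scoped Classical
open Matrix

namespace QAOA

lemma permAct_inv_cancel {n : ℕ} (a : Equiv.Perm (Fin n)) (x : Bit n) :
    permAct a (permAct a⁻¹ x) = x := by
  funext k; simp [permAct]

lemma permAct_injective {n : ℕ} (a : Equiv.Perm (Fin n)) :
    Function.Injective (permAct a (n := n)) := by
  intro x y h
  have := congrArg (permAct a⁻¹) h
  funext k
  have h1 : permAct a⁻¹ (permAct a x) = x := by funext k; simp [permAct]
  have h2 : permAct a⁻¹ (permAct a y) = y := by funext k; simp [permAct]
  rw [h1, h2] at this; rw [this]

lemma permMat_commute_costH {n : ℕ} (f : Bit n → ℝ) (a : Equiv.Perm (Fin n))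
    (hsym : ∀ x : Bit n, f (permAct a x) = f x) :
    Commute (permMat a) (costH n f) := by
  ext x y
  simp only [costH, Matrix.mul_diagonal, Matrix.diagonal_mul, permMat, Matrix.of_apply]
  by_cases h : x = permAct a y
  · subst h; simp [hsym]
  · simp [h]

lemma flip_permAct {n : ℕ} (a : Equiv.Perm (Fin n)) (x : Bit n) (j : Fin n) :
    flip (permAct a x) j = permAct a (flip x (a⁻¹ j)) := by
  funext k
  simp only [flip, permAct, Function.update]
  by_cases h : k = j
  · subst h; simp
  · have h2 : a⁻¹ k ≠ a⁻¹ j := fun hh => h (a⁻¹.injective hh)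
    simp [h, h2]

lemma permMat_mul_Xop {n : ℕ} (a : Equiv.Perm (Fin n)) (j : Fin n) :
    permMat a * Xop n j = Xop n (a j) * permMat a := by
  ext x y
  simp only [Matrix.mul_apply, permMat, Xop, Matrix.of_apply]
  rw [Finset.sum_eq_single (permAct a⁻¹ x), Finset.sum_eq_single (flip x (a j))]
  · rw [permAct_inv_cancel, if_pos rfl, if_pos rfl, one_mul, one_mul]
    have key : flip (permAct a⁻¹ x) j = permAct a⁻¹ (flip x (a j)) := by
      rw [flip_permAct a⁻¹ x j]; simp
    refine if_congr ?_ rfl rfl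
    constructor
    · intro h
      rw [h, key, permAct_inv_cancel]
    · intro h
      apply permAct_injective a
      rw [key, permAct_inv_cancel, ← h]
  all_goals first
    | (simp; done)
    | (intro b hb _; exact hb)
    | (intro b hb hy hx
       exact hb (permAct_injective a (by rw [permAct_inv_cancel, ← hx])))
    | (intro b _ hb
       first
         | (rw [if_neg hb, zero_mul])
         | (by_cases hx : x = permAct a b
            · have hb2 : b = permAct a⁻¹ x := by
                apply permAct_injective a; rw [permAct_inv_cancel, hx]
              exact absurd hb2 hb
            · simp [hx]))

lemma permMat_commute_mixB {n : ℕ} (a : Equiv.Perm (Fin n)) :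
    Commute (permMat a) (mixB n) := by
  unfold Commute SemiconjBy mixB
  rw [Finset.mul_sum, Finset.sum_mul]
  rw [← Equiv.sum_comp a (fun j => Xop n j * permMat a)]
  exact Finset.sum_congr rfl fun j _ => permMat_mul_Xop a j

/-- If `a` is a symmetry of `f`, the induced permutation unitary `A`
commutes with the phase operator `exp(-i γ H(f))` and the mixing operator
`exp(-i β B)` for all parameter values. -/
theorem permMat_commutes_with_qaoa_operators (n : ℕ) (hn : 1 ≤ n)
    (f : Bit n → ℝ) (a : Equiv.Perm (Fin n))
    (hsym : ∀ x : Bit n, f (permAct a x) = f x) :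
    (∀ γ : ℝ,
      permMat a * NormedSpace.exp ((-Complex.I * (γ : ℂ)) • costH n f) -
        NormedSpace.exp ((-Complex.I * (γ : ℂ)) • costH n f) * permMat a = 0) ∧
    (∀ β : ℝ,
      permMat a * NormedSpace.exp ((-Complex.I * (β : ℂ)) • mixB n) -
        NormedSpace.exp ((-Complex.I * (β : ℂ)) • mixB n) * permMat a = 0) := by
  constructor
  · intro γ
    have h := ((permMat_commute_costH f a hsym).smul_right
      (-Complex.I * (γ : ℂ))).exp_right
    rw [sub_eq_zero]; exact h
  · intro β
    have h := ((permMat_commute_mixB a).smul_right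
      (-Complex.I * (β : ℂ))).exp_right
    rw [sub_eq_zero]; exact h

end QAOA
end
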